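/- Let X be a separable complete metric space, Ω = C([0,∞) → X) with the compact-open topology, θ_s the shift, and w ⋈_s v the splicing of paths. Suppose S : X → 2^Ω satisfies: (S3) if w ∈ S(x) and s ≥ 0 then θ_s w ∈ S(w(s)); (S4) if w ∈ S(x) and v ∈ S(w(s)) then w ⋈_s v ∈ S(x). Fix λ > 0 and a bounded continuous φ : X → ℝ, and define ζ(w) = ∫₀^∞ e^{−λt} φ(w(t)) dt. If w maximizes ζ over S(x) and v maximizes ζ over S(w(s)) for some s ≥ 0, then ζ(w ⋈_s v) = ζ(w), and w ⋈_s v also maximizes ζ over S(x). -/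

import Mathlib

open MeasureTheory Set
open scoped NNReal

noncomputable section

/-- The space `Ω = C([0,∞) → X)` with the compact-open topology. -/
abbrev IPath (X : Type*) [TopologicalSpace X] : Type _ := C(ℝ≥0, X)

variable {X : Type*} [TopologicalSpace X]

/-- The shift `θ_s : w(·) ↦ w(s + ·)`. -/
def shift (s : ℝ≥0) (w : IPath X) : IPath X :=
  w.comp ⟨fun t => s + t, by fun_prop⟩

/-- The splicing `w ⋈_s v` of two paths with `w s = v 0`. -/
def splice (s : ℝ≥0) (w v : IPath X) (h : w s = v 0) : IPath X :=
  ⟨fun t => if t ≤ s then w t else v (t - s), by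
    refine Continuous.if_le w.continuous (v.continuous.comp ?_) continuous_id
      continuous_const ?_
    · exact continuous_id.sub continuous_const
    · intro t ht
      rw [ht, tsub_self]
      exact h⟩

/-- The functional `ζ(w) = ∫₀^∞ e^{-λ t} φ(w(t)) dt`. -/
def zeta (lam : ℝ) (phi : X → ℝ) (w : IPath X) : ℝ :=
  ∫ t in Ioi (0 : ℝ), Real.exp (-lam * t) * phi (w (Real.toNNReal t))

lemma aux_integrable {X : Type*} [MetricSpace X] {lam : ℝ} (hlam : 0 < lam)
    (phi : X → ℝ) (hphic : Continuous phi) {M : ℝ} (hM : ∀ y, |phi y| ≤ M)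
    (u : IPath X) (a : ℝ) :
    IntegrableOn (fun t => Real.exp (-lam * t) * phi (u (Real.toNNReal t))) (Ioi a) := by
  have hc : Continuous fun t : ℝ => Real.exp (-lam * t) * phi (u (Real.toNNReal t)) := by
    exact (Real.continuous_exp.comp (continuous_const.mul continuous_id)).mul
      (hphic.comp (u.continuous.comp continuous_real_toNNReal))
  refine Integrable.mono' ((exp_neg_integrableOn_Ioi a hlam).const_mul M)
    hc.aestronglyMeasurable.restrict ?_
  filter_upwards with t
  rw [norm_mul, Real.norm_eq_abs, Real.abs_exp, Real.norm_eq_abs, mul_comm]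
  exact mul_le_mul_of_nonneg_right (hM _) (Real.exp_pos _).le

lemma integral_Ioi_shift (f : ℝ → ℝ) (s : ℝ) :
    ∫ t in Ioi s, f t = ∫ t in Ioi 0, f (t + s) := by
  have key : ∀ t : ℝ, (Ioi (0:ℝ)).indicator (fun t => f (t + s)) t
      = (Ioi s).indicator f (t + s) := by
    intro t
    by_cases h : 0 < t
    · rw [indicator_of_mem (mem_Ioi.mpr h),
        indicator_of_mem (mem_Ioi.mpr (by linarith : s < t + s))]
    · rw [indicator_of_notMem (by simpa using h),
        indicator_of_notMem (by simp only [mem_Ioi, not_lt]; linarith [not_lt.mp h])]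
  rw [← integral_indicator measurableSet_Ioi, ← integral_indicator measurableSet_Ioi]
  simp_rw [key]
  exact (integral_add_right_eq_self ((Ioi s).indicator f) s).symm

lemma zeta_split {X : Type*} [MetricSpace X] {lam : ℝ} (hlam : 0 < lam)
    (phi : X → ℝ) (hphic : Continuous phi) {M : ℝ} (hM : ∀ y, |phi y| ≤ M)
    (u : IPath X) (s : ℝ≥0) :
    zeta lam phi u = (∫ t in Ioc (0:ℝ) s, Real.exp (-lam * t) * phi (u (Real.toNNReal t)))
      + Real.exp (-lam * s) * zeta lam phi (shift s u) := by
  have hint := aux_integrable hlam phi hphic hM u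
  have hsplit : zeta lam phi u
      = (∫ t in Ioc (0:ℝ) s, Real.exp (-lam * t) * phi (u (Real.toNNReal t)))
        + ∫ t in Ioi (s:ℝ), Real.exp (-lam * t) * phi (u (Real.toNNReal t)) := by
    rw [zeta, ← Ioc_union_Ioi_eq_Ioi (s.coe_nonneg),
      setIntegral_union (Ioc_disjoint_Ioi le_rfl) measurableSet_Ioi
        ((hint 0).mono_set (by rw [← Ioc_union_Ioi_eq_Ioi (s.coe_nonneg)]; exact subset_union_left))
        (hint s)]
  rw [hsplit, integral_Ioi_shift]
  congr 1
  rw [zeta, ← integral_const_mul]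
  refine setIntegral_congr_fun measurableSet_Ioi fun t ht => ?_
  have ht0 : (0:ℝ) ≤ t := le_of_lt ht
  have : Real.toNNReal (t + s) = s + Real.toNNReal t := by
    rw [Real.toNNReal_add ht0 s.coe_nonneg, Real.toNNReal_coe, add_comm]
  rw [this]
  show Real.exp (-lam * (t + ↑s)) * phi (u (s + Real.toNNReal t))
      = Real.exp (-lam * ↑s) * (Real.exp (-lam * t) * phi ((shift s u) (Real.toNNReal t)))
  rw [shift]
  simp only [ContinuousMap.comp_apply, ContinuousMap.coe_mk]
  rw [← mul_assoc, ← Real.exp_add]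
  ring_nf

/-- If `w` maximizes `ζ` over `S(x)` and `v` maximizes `ζ` over `S(w(s))`, then
`ζ(w ⋈_s v) = ζ(w)`, and `w ⋈_s v` also maximizes `ζ` over `S(x)`. -/
theorem splice_of_maximizers_is_maximizer
    {X : Type*} [MetricSpace X] [CompleteSpace X] [SecondCountableTopology X]
    (S : X → Set (IPath X))
    (hS0 : ∀ x, ∀ w ∈ S x, w 0 = x)
    (hS3 : ∀ x, ∀ w ∈ S x, ∀ s : ℝ≥0, shift s w ∈ S (w s))
    (hS4 : ∀ x, ∀ w ∈ S x, ∀ s : ℝ≥0, ∀ v, ∀ hv : v ∈ S (w s),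
      splice s w v ((hS0 _ v hv).symm) ∈ S x)
    (lam : ℝ) (hlam : 0 < lam)
    (phi : X → ℝ) (hphic : Continuous phi) (hphib : ∃ M, ∀ y, |phi y| ≤ M)
    (x : X) (s : ℝ≥0) (w v : IPath X)
    (hw : w ∈ S x)
    (hwmax : ∀ u ∈ S x, zeta lam phi u ≤ zeta lam phi w)
    (hv : v ∈ S (w s))
    (hvmax : ∀ u ∈ S (w s), zeta lam phi u ≤ zeta lam phi v) :
    zeta lam phi (splice s w v ((hS0 _ v hv).symm)) = zeta lam phi w ∧
      splice s w v ((hS0 _ v hv).symm) ∈ S x ∧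
      ∀ u ∈ S x, zeta lam phi u ≤ zeta lam phi (splice s w v ((hS0 _ v hv).symm)) := by
  obtain ⟨M, hM⟩ := hphib
  set p := splice s w v ((hS0 _ v hv).symm) with hp
  have hsp : p ∈ S x := hS4 x w hw s v hv
  -- the spliced path shifted by s is v
  have hshiftp : shift s p = v := by
    ext t
    show p (s + t) = v t
    rw [hp, splice]
    simp only [ContinuousMap.coe_mk]
    by_cases h : s + t ≤ s
    · have ht : t = 0 := le_antisymm (by simpa using h) zero_le
      rw [if_pos h, ht, add_zero]
      exact (hS0 _ v hv).symm
    · rw [if_neg h, add_tsub_cancel_left]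
  -- splicing agrees with w on [0, s]
  have hIoc : (∫ t in Ioc (0:ℝ) s, Real.exp (-lam * t) * phi (p (Real.toNNReal t)))
      = ∫ t in Ioc (0:ℝ) s, Real.exp (-lam * t) * phi (w (Real.toNNReal t)) := by
    refine setIntegral_congr_fun measurableSet_Ioc fun t ht => ?_
    have hle : Real.toNNReal t ≤ s := by
      have := Real.toNNReal_le_toNNReal ht.2
      rwa [Real.toNNReal_coe] at this
    rw [hp, splice]
    simp only [ContinuousMap.coe_mk, if_pos hle]
  have split_w := zeta_split hlam phi hphic hM w s
  have split_p := zeta_split hlam phi hphic hM p s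
  rw [hshiftp, hIoc] at split_p
  have hle1 : zeta lam phi p ≤ zeta lam phi w := hwmax p hsp
  have hle2 : zeta lam phi w ≤ zeta lam phi p := by
    rw [split_w, split_p]
    have := hvmax (shift s w) (hS3 x w hw s)
    have hpos : (0:ℝ) < Real.exp (-lam * s) := Real.exp_pos _
    nlinarith
  have heq : zeta lam phi p = zeta lam phi w := le_antisymm hle1 hle2
  exact ⟨heq, hsp, fun u hu => heq ▸ hwmax u hu⟩
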